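/- Let F be a field and a, b ∈ F such that the quaternion algebra H = ℍ[F, a, b] is a division ring (every nonzero element of H is a unit). If x, y ∈ H both lie outside the center of H and x*y = y*x, then y belongs to the F-linear span of {1, x}; equivalently, the quadratic subfields E_x = F·1 + F·x and E_y = F·1 + F·y coincide. -/

import Mathlib

open Quaternion

/-- In a quaternion division algebra, two commuting noncentral elements generate the same
quadratic subfield: if `x * y = y * x` with `x, y` noncentral, then `y` lies in the
`F`-linear span of `{1, x}`. -/
theorem quaternion_commuting_noncentral_span {F : Type*} [Field F] (a b : F)
    (hdiv : ∀ z : ℍ[F, a, b], z ≠ 0 → IsUnit z)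
    (x y : ℍ[F, a, b])
    (hx : x ∉ Set.center ℍ[F, a, b])
    (hy : y ∉ Set.center ℍ[F, a, b])
    (hxy : x * y = y * x) :
    y ∈ Submodule.span F ({1, x} : Set ℍ[F, a, b]) := by
  -- characteristic is not 2, otherwise everything is central
  have h2 : (2 : F) ≠ 0 := by
    intro h2
    apply hx
    rw [Semigroup.mem_center_iff]
    intro g
    refine QuaternionAlgebra.ext ?_ ?_ ?_ ?_ <;>
      simp only [QuaternionAlgebra.re_mul, QuaternionAlgebra.imI_mul,
        QuaternionAlgebra.imJ_mul, QuaternionAlgebra.imK_mul]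
    · ring
    · linear_combination (b * (g.imK * x.imJ - g.imJ * x.imK)) * h2
    · linear_combination (a * (g.imI * x.imK - g.imK * x.imI)) * h2
    · linear_combination (g.imI * x.imJ - g.imJ * x.imI) * h2
  -- component equations from commutation
  have hI := congrArg QuaternionAlgebra.imI hxy
  have hJ := congrArg QuaternionAlgebra.imJ hxy
  have hK := congrArg QuaternionAlgebra.imK hxy
  simp only [QuaternionAlgebra.imI_mul, QuaternionAlgebra.imJ_mul,
    QuaternionAlgebra.imK_mul] at hI hJ hK
  have e1 : b * (x.imK * y.imJ - x.imJ * y.imK) = 0 := by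
    have h : 2 * (b * (x.imK * y.imJ - x.imJ * y.imK)) = 0 := by linear_combination hI
    exact (mul_eq_zero.mp h).resolve_left h2
  have e2 : a * (x.imI * y.imK - x.imK * y.imI) = 0 := by
    have h : 2 * (a * (x.imI * y.imK - x.imK * y.imI)) = 0 := by linear_combination hJ
    exact (mul_eq_zero.mp h).resolve_left h2
  have e3 : x.imI * y.imJ - x.imJ * y.imI = 0 := by
    have h : 2 * (x.imI * y.imJ - x.imJ * y.imI) = 0 := by linear_combination hK
    exact (mul_eq_zero.mp h).resolve_left h2
  -- the pure part of x is nonzero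
  have hp0 : x - (x.re : ℍ[F, a, b]) ≠ 0 := by
    intro h
    apply hx
    have hxre : x = (x.re : ℍ[F, a, b]) := sub_eq_zero.mp h
    rw [Semigroup.mem_center_iff]
    intro g
    rw [hxre]
    exact (QuaternionAlgebra.coe_commute x.re g).symm
  -- its square is the scalar s
  set s : F := a * x.imI ^ 2 + b * x.imJ ^ 2 - a * b * x.imK ^ 2 with hs_def
  have hpp : (x - (x.re : ℍ[F, a, b])) * (x - (x.re : ℍ[F, a, b])) = (s : ℍ[F, a, b]) := by
    refine QuaternionAlgebra.ext ?_ ?_ ?_ ?_ <;>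
      simp [QuaternionAlgebra.re_mul, QuaternionAlgebra.imI_mul,
        QuaternionAlgebra.imJ_mul, QuaternionAlgebra.imK_mul] <;> ring
  have hs : s ≠ 0 := by
    intro h
    rw [h] at hpp
    simp only [QuaternionAlgebra.coe_zero] at hpp
    exact hp0 (((hdiv _ hp0).mul_right_eq_zero).mp hpp)
  set c : F := (a * x.imI * y.imI + b * x.imJ * y.imJ - a * b * x.imK * y.imK) / s with hc_def
  have hrepr : y = (y.re - c * x.re) • (1 : ℍ[F, a, b]) + c • x := by
    refine QuaternionAlgebra.ext ?_ ?_ ?_ ?_ <;>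
      simp [smul_eq_mul] <;> rw [hc_def] <;> field_simp
    · linear_combination (-(b * x.imJ)) * e3 + b * x.imK * e2
    · linear_combination a * x.imI * e3 - a * x.imK * e1
    · linear_combination x.imI * e2 - x.imJ * e1
  rw [hrepr]
  exact Submodule.add_mem _
    (Submodule.smul_mem _ _ (Submodule.subset_span (by simp)))
    (Submodule.smul_mem _ _ (Submodule.subset_span (by simp)))
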